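/- Let B be an r×r real symmetric positive definite matrix, let U ∈ St(r,p₁) with orthonormal completion U⊥ and V ∈ St(r,p₂) with orthonormal completion V⊥. Let Ω ∈ ℝ^{r×r} be skew-symmetric, θ_B ∈ ℝ^{r×r} symmetric, D₁ ∈ ℝ^{(p₁−r)×r}, D₂ ∈ ℝ^{(p₂−r)×r}, and set θ_U := U⊥D₁ + UΩ, θ_V := V⊥D₂ − VΩ, and ξ := θ_U B Vᵀ + U θ_B Vᵀ + U B θ_Vᵀ. Then, with g := ‖D₁‖_F² + ‖D₂‖_F² + 2‖Ω‖_F² + tr(B⁻¹ θ_B B⁻¹ θ_B), it holds that (λmin(B))²·g ≤ ‖ξ‖_F² ≤ 2·(λmax(B))²·g. -/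

import Mathlib

open Matrix

/-- The smallest eigenvalue of a (Hermitian) real matrix; junk value `0` otherwise. -/
noncomputable def eigMin {n : ℕ} (M : Matrix (Fin n) (Fin n) ℝ) : ℝ := by
  classical exact if h : M.IsHermitian then ⨅ i, h.eigenvalues i else 0

/-- The largest eigenvalue of a (Hermitian) real matrix; junk value `0` otherwise. -/
noncomputable def eigMax {n : ℕ} (M : Matrix (Fin n) (Fin n) ℝ) : ℝ := by
  classical exact if h : M.IsHermitian then ⨆ i, h.eigenvalues i else 0

/-- The squared Frobenius norm `‖A‖_F² = tr(AᵀA)`. -/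
noncomputable def frobSq {m n : ℕ} (A : Matrix (Fin m) (Fin n) ℝ) : ℝ :=
  Matrix.trace (Aᵀ * A)

lemma frobSq_eq_sum {m n : ℕ} (A : Matrix (Fin m) (Fin n) ℝ) :
    frobSq A = ∑ j, ∑ i, A i j ^ 2 := by
  simp [frobSq, Matrix.trace, Matrix.diag, Matrix.mul_apply, sq]

lemma frobSq_transpose {m n : ℕ} (A : Matrix (Fin m) (Fin n) ℝ) :
    frobSq Aᵀ = frobSq A := by
  rw [frobSq, frobSq, transpose_transpose, Matrix.trace_mul_comm]

lemma frobSq_mul_right {m r : ℕ} (A : Matrix (Fin m) (Fin r) ℝ)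
    (M : Matrix (Fin r) (Fin r) ℝ) (hM : M * Mᵀ = 1) :
    frobSq (A * M) = frobSq A := by
  rw [frobSq, frobSq, transpose_mul, Matrix.mul_assoc, Matrix.trace_mul_comm]
  simp only [Matrix.mul_assoc]
  rw [hM, Matrix.mul_one]

lemma frobSq_mul_left {m r : ℕ} (A : Matrix (Fin r) (Fin m) ℝ)
    (M : Matrix (Fin r) (Fin r) ℝ) (hM : Mᵀ * M = 1) :
    frobSq (M * A) = frobSq A := by
  rw [frobSq, frobSq, transpose_mul, Matrix.mul_assoc, ← Matrix.mul_assoc Mᵀ, hM,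
    Matrix.one_mul]

lemma trace_symm_mul {m n : ℕ} (X Y : Matrix (Fin m) (Fin n) ℝ) :
    Matrix.trace (Xᵀ * Y) = Matrix.trace (Yᵀ * X) := by
  rw [← Matrix.trace_transpose, transpose_mul, transpose_transpose]

lemma frobSq_add {m n : ℕ} (X Y : Matrix (Fin m) (Fin n) ℝ) :
    frobSq (X + Y) = frobSq X + 2 * Matrix.trace (Xᵀ * Y) + frobSq Y := by
  simp only [frobSq, transpose_add, Matrix.add_mul, Matrix.mul_add, Matrix.trace_add]
  rw [trace_symm_mul Y X]; ring

lemma trace_sandwich {p₁ p₂ a b c e : ℕ} (X₁ : Matrix (Fin p₁) (Fin a) ℝ)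
    (M₁ : Matrix (Fin a) (Fin b) ℝ) (Y₁ : Matrix (Fin p₂) (Fin b) ℝ)
    (X₂ : Matrix (Fin p₁) (Fin c) ℝ) (M₂ : Matrix (Fin c) (Fin e) ℝ)
    (Y₂ : Matrix (Fin p₂) (Fin e) ℝ) :
    Matrix.trace ((X₁ * M₁ * Y₁ᵀ)ᵀ * (X₂ * M₂ * Y₂ᵀ))
      = Matrix.trace (M₁ᵀ * ((X₁ᵀ * X₂) * (M₂ * (Y₂ᵀ * Y₁)))) := by
  simp only [transpose_mul, transpose_transpose, Matrix.mul_assoc]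
  rw [Matrix.trace_mul_comm]
  simp only [Matrix.mul_assoc]


lemma sum_bounds {r p q : ℕ} (d : Fin r → ℝ) (em eM : ℝ)
    (hdpos : ∀ i, 0 < d i) (hmle : ∀ j, em ≤ d j) (hm0 : ∀ _ : Fin r, 0 ≤ em)
    (hMge : ∀ j, d j ≤ eM)
    (E₁ : Matrix (Fin p) (Fin r) ℝ) (E₂ : Matrix (Fin q) (Fin r) ℝ)
    (W T : Matrix (Fin r) (Fin r) ℝ) :
    em ^ 2 * ((∑ j, ∑ i, E₁ i j ^ 2) + (∑ j, ∑ i, E₂ i j ^ 2)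
        + 2 * (∑ j, ∑ i, W i j ^ 2) + ∑ j, ∑ i, T i j ^ 2 * (d i * d j)⁻¹)
      ≤ (∑ j, ∑ i, E₁ i j ^ 2 * d j ^ 2)
        + ((∑ j, ∑ i, W i j ^ 2 * (d i + d j) ^ 2) + ∑ j, ∑ i, T i j ^ 2)
        + (∑ j, ∑ i, E₂ i j ^ 2 * d j ^ 2) ∧
    (∑ j, ∑ i, E₁ i j ^ 2 * d j ^ 2)
        + ((∑ j, ∑ i, W i j ^ 2 * (d i + d j) ^ 2) + ∑ j, ∑ i, T i j ^ 2)
        + (∑ j, ∑ i, E₂ i j ^ 2 * d j ^ 2)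
      ≤ 2 * eM ^ 2 * ((∑ j, ∑ i, E₁ i j ^ 2) + (∑ j, ∑ i, E₂ i j ^ 2)
        + 2 * (∑ j, ∑ i, W i j ^ 2) + ∑ j, ∑ i, T i j ^ 2 * (d i * d j)⁻¹) := by
  have h1 : em ^ 2 * (∑ j, ∑ i, E₁ i j ^ 2) ≤ ∑ j, ∑ i, E₁ i j ^ 2 * d j ^ 2 := by
    simp only [Finset.mul_sum]
    refine Finset.sum_le_sum fun j _ => Finset.sum_le_sum fun i _ => ?_
    have hsq : em ^ 2 ≤ d j ^ 2 := by nlinarith [hmle j, hm0 j]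
    nlinarith [hsq, sq_nonneg (E₁ i j)]
  have h2 : em ^ 2 * (∑ j, ∑ i, E₂ i j ^ 2) ≤ ∑ j, ∑ i, E₂ i j ^ 2 * d j ^ 2 := by
    simp only [Finset.mul_sum]
    refine Finset.sum_le_sum fun j _ => Finset.sum_le_sum fun i _ => ?_
    have hsq : em ^ 2 ≤ d j ^ 2 := by nlinarith [hmle j, hm0 j]
    nlinarith [hsq, sq_nonneg (E₂ i j)]
  have h3 : em ^ 2 * (2 * ∑ j, ∑ i, W i j ^ 2)
      ≤ ∑ j, ∑ i, W i j ^ 2 * (d i + d j) ^ 2 := by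
    simp only [Finset.mul_sum]
    refine Finset.sum_le_sum fun j _ => Finset.sum_le_sum fun i _ => ?_
    have h2m : 2 * em ^ 2 ≤ (d i + d j) ^ 2 := by nlinarith [hmle i, hmle j, hm0 j]
    nlinarith [h2m, sq_nonneg (W i j)]
  have h4 : em ^ 2 * (∑ j, ∑ i, T i j ^ 2 * (d i * d j)⁻¹) ≤ ∑ j, ∑ i, T i j ^ 2 := by
    simp only [Finset.mul_sum]
    refine Finset.sum_le_sum fun j _ => Finset.sum_le_sum fun i _ => ?_
    have hpd : 0 < d i * d j := mul_pos (hdpos i) (hdpos j)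
    have hle : em ^ 2 ≤ d i * d j := by nlinarith [hmle i, hmle j, hm0 j]
    have key : em ^ 2 * (d i * d j)⁻¹ ≤ 1 := by
      rw [← div_eq_mul_inv, div_le_one hpd]; exact hle
    calc em ^ 2 * (T i j ^ 2 * (d i * d j)⁻¹)
        = T i j ^ 2 * (em ^ 2 * (d i * d j)⁻¹) := by ring
      _ ≤ T i j ^ 2 * 1 := mul_le_mul_of_nonneg_left key (sq_nonneg _)
      _ = T i j ^ 2 := mul_one _
  have u1 : (∑ j, ∑ i, E₁ i j ^ 2 * d j ^ 2)
      ≤ 2 * eM ^ 2 * (∑ j, ∑ i, E₁ i j ^ 2) := by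
    simp only [Finset.mul_sum]
    refine Finset.sum_le_sum fun j _ => Finset.sum_le_sum fun i _ => ?_
    have hsq : d j ^ 2 ≤ 2 * eM ^ 2 := by nlinarith [hMge j, (hdpos j).le]
    nlinarith [hsq, sq_nonneg (E₁ i j)]
  have u2 : (∑ j, ∑ i, E₂ i j ^ 2 * d j ^ 2)
      ≤ 2 * eM ^ 2 * (∑ j, ∑ i, E₂ i j ^ 2) := by
    simp only [Finset.mul_sum]
    refine Finset.sum_le_sum fun j _ => Finset.sum_le_sum fun i _ => ?_
    have hsq : d j ^ 2 ≤ 2 * eM ^ 2 := by nlinarith [hMge j, (hdpos j).le]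
    nlinarith [hsq, sq_nonneg (E₂ i j)]
  have u3 : (∑ j, ∑ i, W i j ^ 2 * (d i + d j) ^ 2)
      ≤ 2 * eM ^ 2 * (2 * ∑ j, ∑ i, W i j ^ 2) := by
    simp only [Finset.mul_sum]
    refine Finset.sum_le_sum fun j _ => Finset.sum_le_sum fun i _ => ?_
    have h2m : (d i + d j) ^ 2 ≤ 2 * eM ^ 2 * 2 := by
      nlinarith [hMge i, hMge j, (hdpos i).le, (hdpos j).le]
    nlinarith [h2m, sq_nonneg (W i j)]
  have u4 : (∑ j, ∑ i, T i j ^ 2)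
      ≤ 2 * eM ^ 2 * (∑ j, ∑ i, T i j ^ 2 * (d i * d j)⁻¹) := by
    simp only [Finset.mul_sum]
    refine Finset.sum_le_sum fun j _ => Finset.sum_le_sum fun i _ => ?_
    have hpd : 0 < d i * d j := mul_pos (hdpos i) (hdpos j)
    have hle : d i * d j ≤ 2 * eM ^ 2 := by
      nlinarith [hMge i, hMge j, (hdpos i).le, (hdpos j).le,
        mul_nonneg (sub_nonneg.2 (hMge i)) (sub_nonneg.2 (hMge j))]
    have key : 1 ≤ 2 * eM ^ 2 * (d i * d j)⁻¹ := by
      rw [← div_eq_mul_inv, le_div_iff₀ hpd, one_mul]; exact hle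
    calc T i j ^ 2 = T i j ^ 2 * 1 := (mul_one _).symm
      _ ≤ T i j ^ 2 * (2 * eM ^ 2 * (d i * d j)⁻¹) :=
          mul_le_mul_of_nonneg_left key (sq_nonneg _)
      _ = 2 * eM ^ 2 * (T i j ^ 2 * (d i * d j)⁻¹) := by ring
  constructor
  · linarith [h1, h2, h3, h4]
  · linarith [u1, u2, u3, u4]

set_option maxHeartbeats 1000000 in
/-- Spectrum bounds for the map `(θ_U, θ_B, θ_V) ↦ θ_UBVᵀ + Uθ_BVᵀ + UBθ_Vᵀ` on the
horizontal space of the polar quotient geometry on fixed-rank matrices: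
`λmin(B)²·g ≤ ‖ξ‖_F² ≤ 2λmax(B)²·g`. -/
theorem stmt14 {p₁ p₂ r : ℕ}
    (B : Matrix (Fin r) (Fin r) ℝ) (hB : B.PosDef)
    (U : Matrix (Fin p₁) (Fin r) ℝ) (Uperp : Matrix (Fin p₁) (Fin (p₁ - r)) ℝ)
    (hU : Uᵀ * U = 1) (hUperp : Uperpᵀ * Uperp = 1) (hUUperp : Uᵀ * Uperp = 0)
    (V : Matrix (Fin p₂) (Fin r) ℝ) (Vperp : Matrix (Fin p₂) (Fin (p₂ - r)) ℝ)
    (hV : Vᵀ * V = 1) (hVperp : Vperpᵀ * Vperp = 1) (hVVperp : Vᵀ * Vperp = 0)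
    (Ω : Matrix (Fin r) (Fin r) ℝ) (hΩ : Ωᵀ = -Ω)
    (θB : Matrix (Fin r) (Fin r) ℝ) (hθB : θB.IsSymm)
    (D₁ : Matrix (Fin (p₁ - r)) (Fin r) ℝ) (D₂ : Matrix (Fin (p₂ - r)) (Fin r) ℝ)
    (θU : Matrix (Fin p₁) (Fin r) ℝ) (hθU : θU = Uperp * D₁ + U * Ω)
    (θV : Matrix (Fin p₂) (Fin r) ℝ) (hθV : θV = Vperp * D₂ - V * Ω)
    (ξ : Matrix (Fin p₁) (Fin p₂) ℝ) (hξ : ξ = θU * B * Vᵀ + U * θB * Vᵀ + U * B * θVᵀ)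
    (g : ℝ)
    (hg : g = frobSq D₁ + frobSq D₂ + 2 * frobSq Ω + Matrix.trace (B⁻¹ * θB * B⁻¹ * θB)) :
    (eigMin B) ^ 2 * g ≤ frobSq ξ ∧ frobSq ξ ≤ 2 * (eigMax B) ^ 2 * g := by
  classical
  have hUperpU : Uperpᵀ * U = 0 := by
    have := congrArg Matrix.transpose hUUperp
    simpa [transpose_mul] using this
  have hVperpV : Vperpᵀ * V = 0 := by
    have := congrArg Matrix.transpose hVVperp
    simpa [transpose_mul] using this
  have hBsym : Bᵀ = B := by
    have := hB.1
    rwa [Matrix.IsHermitian, conjTranspose_eq_transpose_of_trivial] at this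
  have hθBt : θBᵀ = θB := hθB
  -- Step A : rewrite ξ
  have hξ' : ξ = Uperp * (D₁ * B) * Vᵀ + U * (Ω * B + θB + B * Ω) * Vᵀ
      + U * (B * D₂ᵀ) * Vperpᵀ := by
    rw [hξ, hθU, hθV]
    simp only [transpose_sub, transpose_mul, hΩ, Matrix.neg_mul, Matrix.mul_neg,
      Matrix.add_mul, Matrix.mul_add, Matrix.mul_sub, Matrix.sub_mul, Matrix.mul_assoc,
      neg_neg, sub_neg_eq_add]
    abel
  -- Step B : Frobenius norm decomposition
  have hfrob : frobSq ξ = frobSq (D₁ * B) + frobSq (Ω * B + θB + B * Ω)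
      + frobSq (B * D₂ᵀ) := by
    have e1 : frobSq (Uperp * (D₁ * B) * Vᵀ) = frobSq (D₁ * B) := by
      rw [frobSq, trace_sandwich, hUperp, hV]
      simp [frobSq, Matrix.mul_one, Matrix.one_mul]
    have e2 : frobSq (U * (Ω * B + θB + B * Ω) * Vᵀ) = frobSq (Ω * B + θB + B * Ω) := by
      rw [frobSq, trace_sandwich, hU, hV]
      simp [frobSq, Matrix.mul_one, Matrix.one_mul]
    have e3 : frobSq (U * (B * D₂ᵀ) * Vperpᵀ) = frobSq (B * D₂ᵀ) := by
      rw [frobSq, trace_sandwich, hU, hVperp]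
      simp [frobSq, Matrix.mul_one, Matrix.one_mul]
    rw [hξ', frobSq_add, frobSq_add, transpose_add, Matrix.add_mul, Matrix.trace_add]
    rw [trace_sandwich, trace_sandwich, trace_sandwich, hUperpU, hVperpV, e1, e2, e3]
    simp
  -- Step C : split middle term
  have hmid : frobSq (Ω * B + θB + B * Ω) = frobSq (Ω * B + B * Ω) + frobSq θB := by
    have hre : Ω * B + θB + B * Ω = (Ω * B + B * Ω) + θB := by abel
    rw [hre, frobSq_add]
    have hKt : (Ω * B + B * Ω)ᵀ = -(Ω * B + B * Ω) := by
      simp only [transpose_add, transpose_mul, hΩ, hBsym, Matrix.neg_mul, Matrix.mul_neg]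
      abel
    have h1 : Matrix.trace ((Ω * B + B * Ω)ᵀ * θB) = Matrix.trace (θB * (Ω * B + B * Ω)) := by
      rw [trace_symm_mul, hθBt]
    have h2 : Matrix.trace ((Ω * B + B * Ω)ᵀ * θB)
        = - Matrix.trace (θB * (Ω * B + B * Ω)) := by
      rw [hKt, Matrix.neg_mul, Matrix.trace_neg, Matrix.trace_mul_comm]
    have h3 : Matrix.trace ((Ω * B + B * Ω)ᵀ * θB) = 0 := by linarith
    rw [h3]; ring
  -- Spectral data
  obtain ⟨Q, hQ1, hQ2, hBspec⟩ : ∃ Q : Matrix (Fin r) (Fin r) ℝ, Qᵀ * Q = 1 ∧ Q * Qᵀ = 1 ∧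
      B = Q * Matrix.diagonal hB.1.eigenvalues * Qᵀ := by
    refine ⟨(hB.1.eigenvectorUnitary : Matrix (Fin r) (Fin r) ℝ), ?_, ?_, ?_⟩
    · have := (Matrix.mem_unitaryGroup_iff').mp (hB.1.eigenvectorUnitary).2
      rwa [Matrix.star_eq_conjTranspose, conjTranspose_eq_transpose_of_trivial] at this
    · have := (Matrix.mem_unitaryGroup_iff).mp (hB.1.eigenvectorUnitary).2
      rwa [Matrix.star_eq_conjTranspose, conjTranspose_eq_transpose_of_trivial] at this
    · have := hB.1.spectral_theorem
      rwa [Unitary.conjStarAlgAut_apply, Matrix.star_eq_conjTranspose,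
        conjTranspose_eq_transpose_of_trivial, RCLike.ofReal_real_eq_id, Function.id_comp] at this
  set d : Fin r → ℝ := hB.1.eigenvalues with hd
  have hdpos : ∀ i, 0 < d i := fun i => hB.eigenvalues_pos i
  have hminEq : eigMin B = ⨅ i, d i := by unfold eigMin; rw [dif_pos hB.1]
  have hmaxEq : eigMax B = ⨆ i, d i := by unfold eigMax; rw [dif_pos hB.1]
  have hmle : ∀ j, eigMin B ≤ d j := fun j => by
    rw [hminEq]; exact ciInf_le (Set.Finite.bddBelow (Set.finite_range d)) j
  have hm0 : ∀ _ : Fin r, 0 ≤ eigMin B := fun j => by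
    have : Nonempty (Fin r) := ⟨j⟩
    rw [hminEq]; exact le_ciInf fun i => (hdpos i).le
  have hMge : ∀ j, d j ≤ eigMax B := fun j => by
    rw [hmaxEq]; exact le_ciSup (Set.Finite.bddAbove (Set.finite_range d)) j
  clear_value d
  -- cancellation helpers
  have hQl : ∀ {k : ℕ} (X : Matrix (Fin r) (Fin k) ℝ), Q * (Qᵀ * X) = X := fun X => by
    rw [← Matrix.mul_assoc, hQ2, Matrix.one_mul]
  have hQr : ∀ {k : ℕ} (X : Matrix (Fin r) (Fin k) ℝ), Qᵀ * (Q * X) = X := fun X => by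
    rw [← Matrix.mul_assoc, hQ1, Matrix.one_mul]
  have hQt1 : Qᵀ * Qᵀᵀ = 1 := by rw [transpose_transpose]; exact hQ1
  have hQt2 : Qᵀᵀ * Qᵀ = 1 := by rw [transpose_transpose]; exact hQ2
  -- sum identities
  have hd1B : frobSq (D₁ * B) = ∑ j, ∑ i, ((D₁ * Q) i j) ^ 2 * d j ^ 2 := by
    have e : D₁ * B = (D₁ * Q) * Matrix.diagonal d * Qᵀ := by
      rw [hBspec]; simp only [Matrix.mul_assoc]
    rw [e, frobSq_mul_right _ _ hQt1, frobSq_eq_sum]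
    exact Finset.sum_congr rfl fun j _ => Finset.sum_congr rfl fun i _ => by
      rw [Matrix.mul_diagonal]; ring
  have hd1 : frobSq D₁ = ∑ j, ∑ i, ((D₁ * Q) i j) ^ 2 := by
    rw [← frobSq_mul_right D₁ Q hQ2, frobSq_eq_sum]
  have hd2B : frobSq (B * D₂ᵀ) = ∑ j, ∑ i, ((D₂ * Q) i j) ^ 2 * d j ^ 2 := by
    have e0 : (B * D₂ᵀ)ᵀ = D₂ * B := by rw [transpose_mul, transpose_transpose, hBsym]
    have e : D₂ * B = (D₂ * Q) * Matrix.diagonal d * Qᵀ := by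
      rw [hBspec]; simp only [Matrix.mul_assoc]
    rw [← frobSq_transpose (B * D₂ᵀ), e0, e, frobSq_mul_right _ _ hQt1, frobSq_eq_sum]
    exact Finset.sum_congr rfl fun j _ => Finset.sum_congr rfl fun i _ => by
      rw [Matrix.mul_diagonal]; ring
  have hd2 : frobSq D₂ = ∑ j, ∑ i, ((D₂ * Q) i j) ^ 2 := by
    rw [← frobSq_mul_right D₂ Q hQ2, frobSq_eq_sum]
  have hKs : frobSq (Ω * B + B * Ω)
      = ∑ j, ∑ i, ((Qᵀ * Ω * Q) i j) ^ 2 * (d i + d j) ^ 2 := by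
    have hKfact : Ω * B + B * Ω
        = Q * ((Qᵀ * Ω * Q) * Matrix.diagonal d + Matrix.diagonal d * (Qᵀ * Ω * Q)) * Qᵀ := by
      rw [hBspec]
      simp only [Matrix.mul_add, Matrix.add_mul, Matrix.mul_assoc, hQl, hQr, hQ2, hQ1,
        Matrix.mul_one]
    rw [hKfact, frobSq_mul_right _ _ hQt1, frobSq_mul_left _ _ hQ1, frobSq_eq_sum]
    exact Finset.sum_congr rfl fun j _ => Finset.sum_congr rfl fun i _ => by
      rw [Matrix.add_apply, Matrix.mul_diagonal, Matrix.diagonal_mul]; ring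
  have hOs : frobSq Ω = ∑ j, ∑ i, ((Qᵀ * Ω * Q) i j) ^ 2 := by
    rw [← frobSq_mul_left Ω Qᵀ hQt2, ← frobSq_mul_right (Qᵀ * Ω) Q hQ2, frobSq_eq_sum]
  have hts : frobSq θB = ∑ j, ∑ i, ((Qᵀ * θB * Q) i j) ^ 2 := by
    rw [← frobSq_mul_left θB Qᵀ hQt2, ← frobSq_mul_right (Qᵀ * θB) Q hQ2, frobSq_eq_sum]
  have hθ'sym : (Qᵀ * θB * Q)ᵀ = Qᵀ * θB * Q := by
    simp only [transpose_mul, transpose_transpose, hθBt, Matrix.mul_assoc]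
  have htr : Matrix.trace (B⁻¹ * θB * B⁻¹ * θB)
      = ∑ j, ∑ i, ((Qᵀ * θB * Q) i j) ^ 2 * (d i * d j)⁻¹ := by
    have hdinv : Matrix.diagonal d * Matrix.diagonal (fun i => (d i)⁻¹) = 1 := by
      rw [Matrix.diagonal_mul_diagonal]
      have : (fun i => d i * (d i)⁻¹) = fun _ => 1 :=
        funext fun i => mul_inv_cancel₀ (hdpos i).ne'
      rw [this, Matrix.diagonal_one]
    have hBinv : B⁻¹ = Q * Matrix.diagonal (fun i => (d i)⁻¹) * Qᵀ := by
      apply Matrix.inv_eq_right_inv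
      rw [hBspec]
      calc Q * Matrix.diagonal d * Qᵀ * (Q * Matrix.diagonal (fun i => (d i)⁻¹) * Qᵀ)
          = Q * (Matrix.diagonal d * Matrix.diagonal (fun i => (d i)⁻¹)) * Qᵀ := by
            simp only [Matrix.mul_assoc, hQr]
        _ = 1 := by rw [hdinv, Matrix.mul_one, hQ2]
    have hconj : Matrix.trace (B⁻¹ * θB * B⁻¹ * θB)
        = Matrix.trace (Matrix.diagonal (fun i => (d i)⁻¹) * (Qᵀ * θB * Q)
            * Matrix.diagonal (fun i => (d i)⁻¹) * (Qᵀ * θB * Q)) := by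
      rw [hBinv]
      simp only [Matrix.mul_assoc]
      rw [Matrix.trace_mul_comm]
      simp only [Matrix.mul_assoc, hQr]
    rw [hconj]
    have key : ∀ P : Matrix (Fin r) (Fin r) ℝ, Pᵀ = P →
        Matrix.trace (Matrix.diagonal (fun i => (d i)⁻¹) * P
          * Matrix.diagonal (fun i => (d i)⁻¹) * P)
        = ∑ j, ∑ i, (P i j) ^ 2 * (d i * d j)⁻¹ := by
      intro P hP
      have hPs : ∀ i j, P j i = P i j := fun i j => congrFun (congrFun hP i) j
      have e1 : Matrix.diagonal (fun i => (d i)⁻¹) * P * Matrix.diagonal (fun i => (d i)⁻¹)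
          = Matrix.of (fun i j => (d i)⁻¹ * P i j * (d j)⁻¹) := by
        ext i j
        rw [Matrix.mul_diagonal, Matrix.diagonal_mul, Matrix.of_apply]
      rw [e1]
      have e2 : ∀ i : Fin r, (Matrix.of (fun i j => (d i)⁻¹ * P i j * (d j)⁻¹) * P) i i
          = ∑ j, (d i)⁻¹ * P i j * (d j)⁻¹ * P j i := by
        intro i
        rw [Matrix.mul_apply]
        rfl
      simp only [Matrix.trace, Matrix.diag]
      rw [Finset.sum_congr rfl fun i _ => e2 i, Finset.sum_comm]
      exact Finset.sum_congr rfl fun j _ => Finset.sum_congr rfl fun i _ => by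
        rw [hPs i j]; ring
    exact key _ hθ'sym
  -- final assembly
  rw [hg, hfrob, hmid, hd1, hd2, hOs, htr, hd1B, hd2B, hKs, hts]
  exact sum_bounds d (eigMin B) (eigMax B) hdpos hmle hm0 hMge
    (D₁ * Q) (D₂ * Q) (Qᵀ * Ω * Q) (Qᵀ * θB * Q)
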